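/- Let n ≥ 1 and let x, y be vectors in n-dimensional Euclidean space with ‖x‖ = ‖y‖ = 1. Then there exists a linear isometric equivalence σ of ℝⁿ × ℝⁿ (equipped with the product inner product) such that σ(x, y) = (x, y), σ(x, −y) = (−x, y), and σ maps the set M = {(u, v) : ‖u‖ = 1 and ‖v‖ = 1} onto itself. (This exhibits S^{n−1}(1) × S^{n−1}(1) as a weakly reflective submanifold of the sphere of radius √2 in ℝ^{2n}: at the point (x,y) the vector (x,−y) spans the normal space of M inside that sphere, and σ fixes the point, reverses the normal vector, and preserves M.) -/

import Mathlib

set_option maxHeartbeats 1000000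

open scoped RealInnerProductSpace

noncomputable def swapMap {E : Type*} [NormedAddCommGroup E] [InnerProductSpace ℝ E]
    (A : E ≃ₗᵢ[ℝ] E) : WithLp 2 (E × E) ≃ₗᵢ[ℝ] WithLp 2 (E × E) where
  toLinearEquiv :=
    (WithLp.linearEquiv 2 ℝ (E × E)).trans <|
      (LinearEquiv.prodComm ℝ E E).trans <|
        (A.toLinearEquiv.prodCongr A.toLinearEquiv).trans (WithLp.linearEquiv 2 ℝ (E × E)).symm
  norm_map' p := by
    have h1 : ∀ q : WithLp 2 (E × E), ‖q‖ ^ 2 = ‖q.fst‖ ^ 2 + ‖q.snd‖ ^ 2 :=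
      WithLp.prod_norm_sq_eq_of_L2
    have := h1 p
    have h2 := h1 (((WithLp.linearEquiv 2 ℝ (E × E)).trans <|
      (LinearEquiv.prodComm ℝ E E).trans <|
        (A.toLinearEquiv.prodCongr A.toLinearEquiv).trans (WithLp.linearEquiv 2 ℝ (E × E)).symm) p)
    have hfst : (((WithLp.linearEquiv 2 ℝ (E × E)).trans <|
      (LinearEquiv.prodComm ℝ E E).trans <|
        (A.toLinearEquiv.prodCongr A.toLinearEquiv).trans (WithLp.linearEquiv 2 ℝ (E × E)).symm) p).fst
        = A p.snd := rfl
    have hsnd : (((WithLp.linearEquiv 2 ℝ (E × E)).trans <|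
      (LinearEquiv.prodComm ℝ E E).trans <|
        (A.toLinearEquiv.prodCongr A.toLinearEquiv).trans (WithLp.linearEquiv 2 ℝ (E × E)).symm) p).snd
        = A p.fst := rfl
    have hnorm : ‖(((WithLp.linearEquiv 2 ℝ (E × E)).trans <|
      (LinearEquiv.prodComm ℝ E E).trans <|
        (A.toLinearEquiv.prodCongr A.toLinearEquiv).trans (WithLp.linearEquiv 2 ℝ (E × E)).symm) p)‖ ^ 2
        = ‖p‖ ^ 2 := by
      rw [h2, hfst, hsnd, A.norm_map, A.norm_map, this]; ring
    rw [← Real.sqrt_sq (norm_nonneg _), ← Real.sqrt_sq (norm_nonneg p), hnorm]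

theorem swapMap_apply {E : Type*} [NormedAddCommGroup E] [InnerProductSpace ℝ E]
    (A : E ≃ₗᵢ[ℝ] E) (u v : E) :
    swapMap A ((WithLp.equiv 2 (E × E)).symm (u, v)) = (WithLp.equiv 2 (E × E)).symm (A v, A u) :=
  rfl

/-- `S^{n-1}(1) × S^{n-1}(1)` is a weakly reflective submanifold of the sphere of
radius `√2` in `ℝⁿ × ℝⁿ` (with the product inner product): at the point `(x, y)`
there is a linear isometric equivalence fixing `(x, y)`, sending the normal vector
`(x, -y)` to its negative, and preserving the product of spheres. -/
theorem stmt_0 (n : ℕ) (hn : 1 ≤ n) (x y : EuclideanSpace ℝ (Fin n))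
    (hx : ‖x‖ = 1) (hy : ‖y‖ = 1) :
    ∃ σ : WithLp 2 (EuclideanSpace ℝ (Fin n) × EuclideanSpace ℝ (Fin n)) ≃ₗᵢ[ℝ]
        WithLp 2 (EuclideanSpace ℝ (Fin n) × EuclideanSpace ℝ (Fin n)),
      σ ((WithLp.equiv 2 _).symm (x, y)) = (WithLp.equiv 2 _).symm (x, y) ∧
      σ ((WithLp.equiv 2 _).symm (x, -y)) = (WithLp.equiv 2 _).symm (-x, y) ∧
      σ '' {p | ‖(WithLp.equiv 2 _ p).1‖ = 1 ∧ ‖(WithLp.equiv 2 _ p).2‖ = 1}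
        = {p | ‖(WithLp.equiv 2 _ p).1‖ = 1 ∧ ‖(WithLp.equiv 2 _ p).2‖ = 1} := by
  obtain ⟨A, hAy, hAx⟩ : ∃ A : EuclideanSpace ℝ (Fin n) ≃ₗᵢ[ℝ] EuclideanSpace ℝ (Fin n),
      A y = x ∧ A x = y := by
    refine ⟨Submodule.reflection (ℝ ∙ (y - x))ᗮ, Submodule.reflection_sub (by rw [hx, hy]), ?_⟩
    have hAy : Submodule.reflection (ℝ ∙ (y - x))ᗮ y = x := Submodule.reflection_sub (by rw [hx, hy])
    exact (congrArg _ hAy).symm.trans (Submodule.reflection_reflection _ y)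
  refine ⟨swapMap A, ?_, ?_, ?_⟩
  · rw [swapMap_apply, hAy, hAx]
  · rw [swapMap_apply, map_neg, hAy, hAx]
  · ext p
    constructor
    · rintro ⟨q, ⟨hq1, hq2⟩, rfl⟩
      refine ⟨?_, ?_⟩
      · show ‖A q.snd‖ = 1; rw [A.norm_map]; exact hq2
      · show ‖A q.fst‖ = 1; rw [A.norm_map]; exact hq1
    · rintro ⟨h1, h2⟩
      refine ⟨(WithLp.equiv 2 (EuclideanSpace ℝ (Fin n) × EuclideanSpace ℝ (Fin n))).symm (A.symm p.snd, A.symm p.fst), ⟨?_, ?_⟩, ?_⟩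
      · show ‖A.symm p.snd‖ = 1; rw [A.symm.norm_map]; exact h2
      · show ‖A.symm p.fst‖ = 1; rw [A.symm.norm_map]; exact h1
      · rw [swapMap_apply, A.apply_symm_apply, A.apply_symm_apply]
        rfl
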